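/- Let x ≥ 2, let q be an integer with 2 ≤ q ≤ x, assume φ*ₓ(q) > 0, and let X be the probability distribution on the primes p ≤ x given by Pr[X = p] = 1/(φ*ₓ(q)·π(x;q,p mod q)) when gcd(p,q) = 1 (and Pr[X = p] = 0 when p | q). Set S² = Σ_{a∈(ℤ/qℤ)^*, π(x;q,a)≠0} (π(x;q,a) − π(x)/φ*ₓ(q))². Then Δ₂²(X) = (1/π(x)²)·Σ_{a∈(ℤ/qℤ)^*, π(x;q,a)≠0} (1/π(x;q,a))·(π(x;q,a) − π(x)/φ*ₓ(q))² + ω(q)/π(x)², and consequently Δ₂²(X) ≤ (S² + ω(q))/π(x)². -/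
import Mathlib


/-- The finite set of primes `p ≤ x`. -/
def primesUpTo (x : ℕ) : Finset ℕ := (Finset.range (x + 1)).filter Nat.Prime

/-- `π(x)`, the number of primes `≤ x`. -/
def primePi (x : ℕ) : ℕ := (primesUpTo x).card

/-- `π(x;q,a)`, the number of primes `p ≤ x` with `p ≡ a (mod q)`. -/
def primePiMod (x q a : ℕ) : ℕ :=
  ((primesUpTo x).filter (fun p => p % q = a % q)).card

/-- Canonical representatives of the invertible classes `(ℤ/qℤ)^*`. -/
def residues (q : ℕ) : Finset ℕ := (Finset.range q).filter (fun a => Nat.Coprime a q)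

/-- `φ*ₓ(q) = #{a ∈ (ℤ/qℤ)^* : π(x;q,a) ≠ 0}`. -/
def phiStar (x q : ℕ) : ℕ := ((residues q).filter (fun a => primePiMod x q a ≠ 0)).card

lemma coprime_mod_iff (p q : ℕ) : Nat.Coprime (p % q) q ↔ Nat.Coprime p q := by
  unfold Nat.Coprime
  conv_rhs => rw [Nat.gcd_comm, Nat.gcd_rec]

lemma noncoprime_primes_eq (x q : ℕ) (hq : 2 ≤ q) (hqx : q ≤ x) :
    (primesUpTo x).filter (fun p => ¬ Nat.Coprime p q) = q.primeFactors := by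
  ext p
  simp only [primesUpTo, Finset.mem_filter, Finset.mem_range, Nat.mem_primeFactors]
  constructor
  · rintro ⟨⟨_, hp⟩, hnc⟩
    exact ⟨hp, hp.coprime_iff_not_dvd.not_left.mp hnc, by omega⟩
  · rintro ⟨hp, hdvd, _⟩
    refine ⟨⟨?_, hp⟩, fun hc => hp.coprime_iff_not_dvd.mp hc hdvd⟩
    have := Nat.le_of_dvd (by omega) hdvd
    omega

lemma fiber_card (x q a : ℕ) (ha : a ∈ residues q) :
    (((primesUpTo x).filter (fun p => Nat.Coprime p q)).filter
      (fun p => p % q = a)).card = primePiMod x q a := by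
  simp only [residues, Finset.mem_filter, Finset.mem_range] at ha
  unfold primePiMod
  congr 1
  rw [Finset.filter_filter]
  apply Finset.filter_congr
  intro p _
  rw [Nat.mod_eq_of_lt ha.1]
  constructor
  · rintro ⟨_, h⟩; exact h
  · intro h
    refine ⟨?_, h⟩
    rw [← coprime_mod_iff, h]; exact ha.2

/-- Let `x ≥ 2`, `2 ≤ q ≤ x`, `φ*ₓ(q) > 0`, and let `X` be the
distribution on primes `p ≤ x` with `Pr[X = p] = 1/(φ*ₓ(q)·π(x;q,p mod q))` when
`gcd(p,q) = 1` and `Pr[X = p] = 0` when `p ∣ q`. With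
`S² = ∑_{a∈(ℤ/qℤ)^*, π(x;q,a)≠0} (π(x;q,a) − π(x)/φ*ₓ(q))²`, one has
`Δ₂²(X) = (1/π(x)²)·∑_{a∈(ℤ/qℤ)^*, π(x;q,a)≠0} (1/π(x;q,a))·(π(x;q,a) − π(x)/φ*ₓ(q))²
  + ω(q)/π(x)²` and consequently `Δ₂²(X) ≤ (S² + ω(q))/π(x)²`. -/
theorem sq_imbalance_eq_and_le_phiStar (x q : ℕ) (hx : 2 ≤ x) (hq : 2 ≤ q) (hqx : q ≤ x)
    (hφ : 0 < phiStar x q)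
    (X : ℕ → ℝ)
    (hX : ∀ p ∈ primesUpTo x,
      X p = if Nat.Coprime p q
        then 1 / ((phiStar x q : ℝ) * (primePiMod x q (p % q) : ℝ)) else 0) :
    (∑ p ∈ primesUpTo x, (X p - 1 / (primePi x : ℝ)) ^ 2
      = (1 / (primePi x : ℝ) ^ 2) *
          ∑ a ∈ (residues q).filter (fun a => primePiMod x q a ≠ 0),
            (1 / (primePiMod x q a : ℝ)) *
              ((primePiMod x q a : ℝ) - (primePi x : ℝ) / (phiStar x q : ℝ)) ^ 2
        + (q.primeFactors.card : ℝ) / (primePi x : ℝ) ^ 2) ∧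
    ∑ p ∈ primesUpTo x, (X p - 1 / (primePi x : ℝ)) ^ 2
      ≤ ((∑ a ∈ (residues q).filter (fun a => primePiMod x q a ≠ 0),
            ((primePiMod x q a : ℝ) - (primePi x : ℝ) / (phiStar x q : ℝ)) ^ 2)
          + (q.primeFactors.card : ℝ)) / (primePi x : ℝ) ^ 2 := by
  have hπ : 0 < primePi x := by
    refine Finset.card_pos.mpr ⟨2, ?_⟩
    simp only [primesUpTo, Finset.mem_filter, Finset.mem_range]
    exact ⟨by omega, Nat.prime_two⟩
  have hπR : (primePi x : ℝ) ≠ 0 := Nat.cast_ne_zero.mpr hπ.ne'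
  have hφR : (phiStar x q : ℝ) ≠ 0 := Nat.cast_ne_zero.mpr hφ.ne'
  -- split the sum into coprime and non-coprime primes
  have hsplit :
      ∑ p ∈ primesUpTo x, (X p - 1 / (primePi x : ℝ)) ^ 2
      = (∑ p ∈ (primesUpTo x).filter (fun p => Nat.Coprime p q),
          (X p - 1 / (primePi x : ℝ)) ^ 2)
        + ∑ p ∈ (primesUpTo x).filter (fun p => ¬ Nat.Coprime p q),
          (X p - 1 / (primePi x : ℝ)) ^ 2 :=
    (Finset.sum_filter_add_sum_filter_not _ _ _).symm
  -- non-coprime part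
  have hnc : ∑ p ∈ (primesUpTo x).filter (fun p => ¬ Nat.Coprime p q),
      (X p - 1 / (primePi x : ℝ)) ^ 2
      = (q.primeFactors.card : ℝ) / (primePi x : ℝ) ^ 2 := by
    have hterm : ∀ p ∈ (primesUpTo x).filter (fun p => ¬ Nat.Coprime p q),
        (X p - 1 / (primePi x : ℝ)) ^ 2 = 1 / (primePi x : ℝ) ^ 2 := by
      intro p hp
      simp only [Finset.mem_filter] at hp
      rw [hX p hp.1, if_neg hp.2, zero_sub, neg_sq, div_pow, one_pow]
    rw [Finset.sum_congr rfl hterm, Finset.sum_const, noncoprime_primes_eq x q hq hqx,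
      nsmul_eq_mul, mul_one_div]
  -- coprime part: group by residue class
  set A := (residues q).filter (fun a => primePiMod x q a ≠ 0) with hA
  have hcop : ∑ p ∈ (primesUpTo x).filter (fun p => Nat.Coprime p q),
      (X p - 1 / (primePi x : ℝ)) ^ 2
      = ∑ a ∈ residues q, (primePiMod x q a : ℝ) *
          (1 / ((phiStar x q : ℝ) * (primePiMod x q a : ℝ)) - 1 / (primePi x : ℝ)) ^ 2 := by
    rw [← Finset.sum_fiberwise_of_maps_to (g := fun p => p % q) (t := residues q) ?_]
    · refine Finset.sum_congr rfl fun a ha => ?_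
      rw [Finset.sum_congr rfl (fun p hp => ?_), Finset.sum_const, fiber_card x q a ha,
        nsmul_eq_mul]
      simp only [Finset.mem_filter] at hp
      obtain ⟨⟨hpx, hpc⟩, hpa⟩ := hp
      rw [hX p hpx, if_pos hpc, hpa]
    · intro p hp
      simp only [Finset.mem_filter] at hp
      simp only [residues, Finset.mem_filter, Finset.mem_range]
      exact ⟨Nat.mod_lt _ (by omega), (coprime_mod_iff p q).mpr hp.2⟩
  -- restrict to classes with nonzero count
  have hrestrict : ∑ a ∈ residues q, (primePiMod x q a : ℝ) *
          (1 / ((phiStar x q : ℝ) * (primePiMod x q a : ℝ)) - 1 / (primePi x : ℝ)) ^ 2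
      = ∑ a ∈ A, (primePiMod x q a : ℝ) *
          (1 / ((phiStar x q : ℝ) * (primePiMod x q a : ℝ)) - 1 / (primePi x : ℝ)) ^ 2 := by
    rw [hA, Finset.sum_filter]
    refine Finset.sum_congr rfl fun a _ => ?_
    by_cases h : primePiMod x q a ≠ 0
    · rw [if_pos h]
    · rw [if_neg h]
      push_neg at h
      rw [h]; simp
  -- algebraic identity per class
  have halg : ∑ a ∈ A, (primePiMod x q a : ℝ) *
          (1 / ((phiStar x q : ℝ) * (primePiMod x q a : ℝ)) - 1 / (primePi x : ℝ)) ^ 2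
      = (1 / (primePi x : ℝ) ^ 2) * ∑ a ∈ A,
          (1 / (primePiMod x q a : ℝ)) *
            ((primePiMod x q a : ℝ) - (primePi x : ℝ) / (phiStar x q : ℝ)) ^ 2 := by
    rw [Finset.mul_sum]
    refine Finset.sum_congr rfl fun a ha => ?_
    have hne : (primePiMod x q a : ℝ) ≠ 0 := by
      simp only [hA, Finset.mem_filter] at ha
      exact Nat.cast_ne_zero.mpr ha.2
    field_simp
    ring
  have heq : ∑ p ∈ primesUpTo x, (X p - 1 / (primePi x : ℝ)) ^ 2
      = (1 / (primePi x : ℝ) ^ 2) *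
          ∑ a ∈ A, (1 / (primePiMod x q a : ℝ)) *
              ((primePiMod x q a : ℝ) - (primePi x : ℝ) / (phiStar x q : ℝ)) ^ 2
        + (q.primeFactors.card : ℝ) / (primePi x : ℝ) ^ 2 := by
    rw [hsplit, hnc, hcop, hrestrict, halg]
  refine ⟨heq, ?_⟩
  rw [heq]
  have hbound : ∑ a ∈ A, (1 / (primePiMod x q a : ℝ)) *
          ((primePiMod x q a : ℝ) - (primePi x : ℝ) / (phiStar x q : ℝ)) ^ 2
      ≤ ∑ a ∈ A, ((primePiMod x q a : ℝ) - (primePi x : ℝ) / (phiStar x q : ℝ)) ^ 2 := by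
    refine Finset.sum_le_sum fun a ha => ?_
    have h1 : (1 : ℝ) ≤ (primePiMod x q a : ℝ) := by
      simp only [hA, Finset.mem_filter] at ha
      exact_mod_cast Nat.one_le_iff_ne_zero.mpr ha.2
    have : 1 / (primePiMod x q a : ℝ) ≤ 1 := by
      rw [div_le_one (by linarith)]; exact h1
    nlinarith [sq_nonneg ((primePiMod x q a : ℝ) - (primePi x : ℝ) / (phiStar x q : ℝ)),
      one_div_pos.mpr (lt_of_lt_of_le one_pos h1)]
  have h3 : ((∑ a ∈ A, ((primePiMod x q a : ℝ) - (primePi x : ℝ) / (phiStar x q : ℝ)) ^ 2)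
      + (q.primeFactors.card : ℝ)) / (primePi x : ℝ) ^ 2
      = (1 / (primePi x : ℝ) ^ 2) *
          (∑ a ∈ A, ((primePiMod x q a : ℝ) - (primePi x : ℝ) / (phiStar x q : ℝ)) ^ 2)
        + (q.primeFactors.card : ℝ) / (primePi x : ℝ) ^ 2 := by ring
  rw [h3]
  have h2 := mul_le_mul_of_nonneg_left hbound
    (by positivity : (0:ℝ) ≤ 1 / (primePi x : ℝ) ^ 2)
  linarith
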